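/- Let f and g be nonzero polynomials in MvPolynomial (Fin n) ℂ. For a polynomial p, let N(p) denote the convex hull in ℝⁿ of the set {(fun i => (d i : ℝ)) | d ∈ p.support} of its exponent vectors viewed as real vectors (its Newton polytope). Then N(f * g) = N(f) + N(g), where the sum on the right is the Minkowski sum of subsets of ℝⁿ. -/

import Mathlib

open scoped Pointwise

/-- The Newton polytope of a multivariate polynomial: the convex hull in `ℝⁿ` of
its exponent vectors. -/
noncomputable def newtonPolytope (n : ℕ) (p : MvPolynomial (Fin n) ℂ) :
    Set (Fin n → ℝ) :=
  convexHull ℝ ((fun d : Fin n →₀ ℕ => (fun i => (d i : ℝ))) '' (p.support : Set (Fin n →₀ ℕ)))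

namespace NewtonAux

open MvPolynomial

variable {n : ℕ}

/-- Embedding of exponent vectors into `ℝⁿ`. -/
noncomputable def e (d : Fin n →₀ ℕ) : Fin n → ℝ := fun i => (d i : ℝ)

lemma e_add (a b : Fin n →₀ ℕ) : e (a + b) = e a + e b := by
  funext i
  simp [e]

/-- The face polynomial of `f` with respect to the functional `ℓ` and level `Mf`. -/
noncomputable def face (ℓ : (Fin n → ℝ) →L[ℝ] ℝ) (f : MvPolynomial (Fin n) ℂ) (Mf : ℝ) :
    MvPolynomial (Fin n) ℂ :=
  ∑ d ∈ f.support.filter (fun d => ℓ (e d) = Mf), monomial d (f.coeff d)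

lemma coeff_face (ℓ : (Fin n → ℝ) →L[ℝ] ℝ) (f : MvPolynomial (Fin n) ℂ) (Mf : ℝ)
    (a : Fin n →₀ ℕ) :
    (face ℓ f Mf).coeff a =
      if a ∈ f.support.filter (fun d => ℓ (e d) = Mf) then f.coeff a else 0 := by
  classical
  unfold face
  rw [MvPolynomial.coeff_sum]
  simp_rw [MvPolynomial.coeff_monomial]
  exact Finset.sum_ite_eq' _ a _

lemma face_key (ℓ : (Fin n → ℝ) →L[ℝ] ℝ) (f g : MvPolynomial (Fin n) ℂ)
    (Mf Mg : ℝ)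
    (hfb : ∀ a ∈ f.support, ℓ (e a) ≤ Mf) (hfe : ∃ a ∈ f.support, ℓ (e a) = Mf)
    (hgb : ∀ b ∈ g.support, ℓ (e b) ≤ Mg) (hge : ∃ b ∈ g.support, ℓ (e b) = Mg) :
    ∃ d ∈ (f * g).support, ℓ (e d) = Mf + Mg := by
  classical
  set F := face ℓ f Mf with hF
  set G := face ℓ g Mg with hG
  -- F and G are nonzero
  obtain ⟨a₀, ha₀, ha₀M⟩ := hfe
  obtain ⟨b₀, hb₀, hb₀M⟩ := hge
  have hFne : F ≠ 0 := by
    intro h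
    have : F.coeff a₀ = 0 := by rw [h]; simp
    rw [coeff_face, if_pos (Finset.mem_filter.mpr ⟨ha₀, ha₀M⟩)] at this
    exact (MvPolynomial.mem_support_iff.mp ha₀) this
  have hGne : G ≠ 0 := by
    intro h
    have : G.coeff b₀ = 0 := by rw [h]; simp
    rw [coeff_face, if_pos (Finset.mem_filter.mpr ⟨hb₀, hb₀M⟩)] at this
    exact (MvPolynomial.mem_support_iff.mp hb₀) this
  have hFGne : F * G ≠ 0 := mul_ne_zero hFne hGne
  obtain ⟨d, hd⟩ := MvPolynomial.support_nonempty.mpr hFGne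
  -- d = a + b with a in the f-face, b in the g-face
  have hd' := MvPolynomial.support_mul F G hd
  rw [Finset.mem_add] at hd'
  obtain ⟨a, ha, b, hb, hab⟩ := hd'
  have haF : a ∈ f.support.filter (fun d => ℓ (e d) = Mf) := by
    by_contra h
    have := MvPolynomial.mem_support_iff.mp ha
    rw [coeff_face, if_neg h] at this
    exact this rfl
  have hbG : b ∈ g.support.filter (fun d => ℓ (e d) = Mg) := by
    by_contra h
    have := MvPolynomial.mem_support_iff.mp hb
    rw [coeff_face, if_neg h] at this
    exact this rfl
  have haM : ℓ (e a) = Mf := (Finset.mem_filter.mp haF).2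
  have hbM : ℓ (e b) = Mg := (Finset.mem_filter.mp hbG).2
  have hdM : ℓ (e d) = Mf + Mg := by
    rw [← hab, e_add, map_add, haM, hbM]
  refine ⟨d, ?_, hdM⟩
  -- the coefficient of f*g at d agrees with that of F*G at d
  have hcoeff : (f * g).coeff d = (F * G).coeff d := by
    rw [MvPolynomial.coeff_mul, MvPolynomial.coeff_mul]
    refine Finset.sum_congr rfl ?_
    intro x hx
    have hxsum : x.1 + x.2 = d := Finset.HasAntidiagonal.mem_antidiagonal.mp hx
    by_cases h1 : x.1 ∈ f.support
    · by_cases h2 : x.2 ∈ g.support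
      · -- both in supports: values must be maximal
        have hle1 : ℓ (e x.1) ≤ Mf := hfb _ h1
        have hle2 : ℓ (e x.2) ≤ Mg := hgb _ h2
        have hsum : ℓ (e x.1) + ℓ (e x.2) = Mf + Mg := by
          rw [← map_add, ← e_add, hxsum, hdM]
        have hM1 : ℓ (e x.1) = Mf := by linarith
        have hM2 : ℓ (e x.2) = Mg := by linarith
        rw [coeff_face, if_pos (Finset.mem_filter.mpr ⟨h1, hM1⟩),
          coeff_face, if_pos (Finset.mem_filter.mpr ⟨h2, hM2⟩)]
      · have h2' : g.coeff x.2 = 0 := MvPolynomial.notMem_support_iff.mp h2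
        have hG0 : G.coeff x.2 = 0 := by
          rw [coeff_face]; split <;> simp [h2']
        rw [h2', hG0, mul_zero, mul_zero]
    · have h1' : f.coeff x.1 = 0 := MvPolynomial.notMem_support_iff.mp h1
      have hF0 : F.coeff x.1 = 0 := by
        rw [coeff_face]; split <;> simp [h1']
      rw [h1', hF0, zero_mul, zero_mul]
  rw [MvPolynomial.mem_support_iff, hcoeff]
  exact MvPolynomial.mem_support_iff.mp hd

end NewtonAux

open NewtonAux MvPolynomial in
/-- The Newton polytope of a product of nonzero polynomials is the Minkowski sum
of the Newton polytopes of the factors. -/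
theorem newtonPolytope_mul (n : ℕ) (f g : MvPolynomial (Fin n) ℂ)
    (hf : f ≠ 0) (hg : g ≠ 0) :
    newtonPolytope n (f * g) = newtonPolytope n f + newtonPolytope n g := by
  classical
  have hfg : f * g ≠ 0 := mul_ne_zero hf hg
  have himg : (e '' ((f.support + g.support : Finset (Fin n →₀ ℕ)) : Set (Fin n →₀ ℕ)))
      = e '' (f.support : Set (Fin n →₀ ℕ)) + e '' (g.support : Set (Fin n →₀ ℕ)) := by
    rw [Finset.coe_add]
    ext x
    constructor
    · rintro ⟨d, hd, rfl⟩
      rw [Set.mem_add] at hd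
      obtain ⟨a, ha, b, hb, rfl⟩ := hd
      exact ⟨e a, ⟨a, ha, rfl⟩, e b, ⟨b, hb, rfl⟩, (e_add a b).symm⟩
    · rintro ⟨y, ⟨a, ha, rfl⟩, z, ⟨b, hb, rfl⟩, rfl⟩
      exact ⟨a + b, Set.add_mem_add ha hb, e_add a b⟩
  have hEq : newtonPolytope n f + newtonPolytope n g
      = convexHull ℝ (e '' ((f.support + g.support : Finset (Fin n →₀ ℕ)) : Set (Fin n →₀ ℕ))) := by
    rw [himg, convexHull_add]
    rfl
  apply Set.Subset.antisymm
  · -- easy inclusion via support_mul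
    rw [hEq]
    apply convexHull_mono
    apply Set.image_mono
    exact_mod_cast MvPolynomial.support_mul f g
  · -- hard inclusion via separation
    intro x hx
    by_contra hA
    have hfin : ((fun d : Fin n →₀ ℕ => (fun i => (d i : ℝ))) ''
        ((f * g).support : Set (Fin n →₀ ℕ))).Finite :=
      ((f * g).support.finite_toSet).image _
    have hclosed : IsClosed (newtonPolytope n (f * g)) :=
      (hfin.isCompact_convexHull (𝕜 := ℝ)).isClosed
    obtain ⟨ℓ, u, hsep, hux⟩ :=
      geometric_hahn_banach_closed_point (convex_convexHull ℝ _) hclosed hA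
    -- max values over supports
    have hfne : f.support.Nonempty := MvPolynomial.support_nonempty.mpr hf
    have hgne : g.support.Nonempty := MvPolynomial.support_nonempty.mpr hg
    set Mf := f.support.sup' hfne (fun d => ℓ (e d)) with hMf
    set Mg := g.support.sup' hgne (fun d => ℓ (e d)) with hMg
    have hfb : ∀ a ∈ f.support, ℓ (e a) ≤ Mf := fun a ha => Finset.le_sup' (fun d => ℓ (e d)) ha
    have hgb : ∀ b ∈ g.support, ℓ (e b) ≤ Mg := fun b hb => Finset.le_sup' (fun d => ℓ (e d)) hb
    obtain ⟨a₀, ha₀, ha₀M⟩ := Finset.exists_mem_eq_sup' hfne (fun d => ℓ (e d))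
    obtain ⟨b₀, hb₀, hb₀M⟩ := Finset.exists_mem_eq_sup' hgne (fun d => ℓ (e d))
    obtain ⟨d, hd, hdM⟩ := face_key ℓ f g Mf Mg hfb ⟨a₀, ha₀, ha₀M.symm⟩ hgb ⟨b₀, hb₀, hb₀M.symm⟩
    -- e d lies in the Newton polytope of f*g, so ℓ (e d) < u
    have hdA : e d ∈ newtonPolytope n (f * g) :=
      subset_convexHull ℝ _ ⟨d, hd, rfl⟩
    have hdu : ℓ (e d) < u := hsep _ hdA
    -- x = y + z with ℓ y ≤ Mf, ℓ z ≤ Mg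
    obtain ⟨y, hy, z, hz, rfl⟩ := hx
    have hyMf : ℓ y ≤ Mf := by
      have : newtonPolytope n f ⊆ {v | ℓ v ≤ Mf} :=
        convexHull_min (by rintro v ⟨a, ha, rfl⟩; exact hfb a ha)
          (convex_halfSpace_le (LinearMap.isLinear (ℓ : (Fin n → ℝ) →ₗ[ℝ] ℝ)) Mf)
      exact this hy
    have hzMg : ℓ z ≤ Mg := by
      have : newtonPolytope n g ⊆ {v | ℓ v ≤ Mg} :=
        convexHull_min (by rintro v ⟨b, hb, rfl⟩; exact hgb b hb)
          (convex_halfSpace_le (LinearMap.isLinear (ℓ : (Fin n → ℝ) →ₗ[ℝ] ℝ)) Mg)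
      exact this hz
    have : ℓ (y + z) ≤ Mf + Mg := by rw [map_add]; linarith
    rw [← hdM] at this
    linarith
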